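/- Inverse Mapping Theorem over a test-ring: Let A be a test-ring, U an m-adic neighbourhood of 0 in C_A^m, and f : U → C_A^m a textile map with f(0) = 0. Assume f = ℓ + h and f(U) ⊆ W, where ℓ : U → W is a linear textile map that is invertible, i.e. there is a linear map ℓ̃ : W → U with ℓ∘ℓ̃ = id_W and ℓ̃∘ℓ = id_U. If ℓ̃∘h is contractive on U with respect to the refined order W(·), then f admits an inverse on U: there is a textile map g : f(U) → U with f∘g = id on f(U) and g∘f = id on U. -/

import Mathlib

/- Inverse Mapping Theorem for textile maps over a test-ring. -/

noncomputable section

open MvPowerSeries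

/-- Coefficient family of a vector of cords with coefficients in `A`. -/
def cf {A : Type} [CommRing A] {n q : ℕ} (c : Fin q → MvPowerSeries (Fin n) A) :
    Fin q × (Fin n →₀ ℕ) → A :=
  fun ν => MvPowerSeries.coeff ν.2 (c ν.1)

/-- Data of a textile map `C_A^q → C_A^p`. -/
def TexData (A : Type) [CommRing A] (n q p : ℕ) : Type :=
  Fin p × (Fin n →₀ ℕ) → MvPolynomial (Fin q × (Fin n →₀ ℕ)) A

/-- Evaluation of textile data. -/
def TexData.eval {A : Type} [CommRing A] {n q p : ℕ} (F : TexData A n q p)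
    (c : Fin q → MvPowerSeries (Fin n) A) : Fin p → MvPowerSeries (Fin n) A :=
  fun j => (fun d => MvPolynomial.eval (cf c) (F (j, d)) : (Fin n →₀ ℕ) → A)

/-- A map between cord spaces over `A` is textile if it is the evaluation of textile data. -/
def IsTextile {A : Type} [CommRing A] {n q p : ℕ}
    (f : (Fin q → MvPowerSeries (Fin n) A) → Fin p → MvPowerSeries (Fin n) A) : Prop :=
  ∃ F : TexData A n q p, ∀ c, f c = F.eval c

/-- The order of a vector of cords, with values in `ℕ∞`. -/
def ordV {A : Type} [CommRing A] {n q : ℕ} (c : Fin q → MvPowerSeries (Fin n) A) : ℕ∞ :=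
  sInf {N : ℕ∞ | ∃ (j : Fin q) (d : Fin n →₀ ℕ),
    MvPowerSeries.coeff d (c j) ≠ 0 ∧ N = (d.sum fun _ e => e : ℕ)}

-- `pow(a)`: the largest `i` with `a ∈ 𝔫^i` for `a ≠ 0`, and `N` for `a = 0`.
open Classical in
def powIdx {A : Type} [CommRing A] (𝔫 : Ideal A) (N : ℕ) (a : A) : ℕ :=
  if a = 0 then N else sSup {i : ℕ | a ∈ 𝔫 ^ i}

/-- The second component of the refined order: the minimum of `pow` over the nonzero
coefficients of minimal order. -/
def powAtMin {A : Type} [CommRing A] (𝔫 : Ideal A) (N : ℕ) {n q : ℕ}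
    (c : Fin q → MvPowerSeries (Fin n) A) : ℕ :=
  sInf {e : ℕ | ∃ (j : Fin q) (d : Fin n →₀ ℕ),
    MvPowerSeries.coeff d (c j) ≠ 0 ∧ ((d.sum fun _ e' => e' : ℕ) : ℕ∞) = ordV c ∧
    e = powIdx 𝔫 N (MvPowerSeries.coeff d (c j))}

/-- The refined order `W(c) = (ord c, pow(c_{ord c}))`. -/
def WOrd {A : Type} [CommRing A] (𝔫 : Ideal A) (N : ℕ) {n q : ℕ}
    (c : Fin q → MvPowerSeries (Fin n) A) : ℕ∞ × ℕ :=
  (ordV c, powAtMin 𝔫 N c)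

/-- Lexicographic comparison on `ℕ∞ × ℕ`. -/
def refLt (x y : ℕ∞ × ℕ) : Prop :=
  x.1 < y.1 ∨ (x.1 = y.1 ∧ x.2 < y.2)

/-- The `m`-adic neighbourhood `m^l · C_A^q` of `0`. -/
def nbhd (A : Type) [CommRing A] (n q l : ℕ) : Set (Fin q → MvPowerSeries (Fin n) A) :=
  {c | ∀ (j : Fin q) (d : Fin n →₀ ℕ),
    (d.sum fun _ e => e) < l → MvPowerSeries.coeff d (c j) = 0}

section AuxTextile

variable {A : Type} [CommRing A] {n q p r : ℕ}

lemma myEval_bind₁ {σ τ : Type*} (x : τ → A) (g : σ → MvPolynomial τ A)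
    (φ : MvPolynomial σ A) :
    MvPolynomial.eval x (MvPolynomial.bind₁ g φ) =
      MvPolynomial.eval (fun i => MvPolynomial.eval x (g i)) φ :=
  MvPolynomial.eval₂Hom_bind₁ (RingHom.id A) x g φ

lemma isTextile_sub
    {f g : (Fin q → MvPowerSeries (Fin n) A) → Fin p → MvPowerSeries (Fin n) A}
    (hf : IsTextile f) (hg : IsTextile g) : IsTextile (fun c => f c - g c) := by
  obtain ⟨F, hF⟩ := hf
  obtain ⟨G, hG⟩ := hg
  refine ⟨fun ν => F ν - G ν, fun c => ?_⟩
  funext j d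
  have h1 : f c j d = MvPolynomial.eval (cf c) (F (j, d)) := by rw [hF]; rfl
  have h2 : g c j d = MvPolynomial.eval (cf c) (G (j, d)) := by rw [hG]; rfl
  show f c j d - g c j d = MvPolynomial.eval (cf c) (F (j, d) - G (j, d))
  rw [h1, h2, map_sub]

lemma cf_texEval (G : TexData A n r q) (c : Fin r → MvPowerSeries (Fin n) A) :
    cf (G.eval c) = fun ν => MvPolynomial.eval (cf c) (G ν) := by
  funext ν
  rfl

lemma isTextile_comp
    {f : (Fin q → MvPowerSeries (Fin n) A) → Fin p → MvPowerSeries (Fin n) A}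
    {g : (Fin r → MvPowerSeries (Fin n) A) → Fin q → MvPowerSeries (Fin n) A}
    (hf : IsTextile f) (hg : IsTextile g) : IsTextile (fun c => f (g c)) := by
  obtain ⟨F, hF⟩ := hf
  obtain ⟨G, hG⟩ := hg
  refine ⟨fun ν => MvPolynomial.bind₁ G (F ν), fun c => ?_⟩
  funext j d
  have h1 : f (g c) j d = MvPolynomial.eval (cf (g c)) (F (j, d)) := by rw [hF]; rfl
  rw [show (fun c => f (g c)) c = f (g c) from rfl] at *
  show f (g c) j d = MvPolynomial.eval (cf c) (MvPolynomial.bind₁ G (F (j, d)))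
  rw [h1, hG, cf_texEval]
  exact (myEval_bind₁ (cf c) G (F (j, d))).symm

end AuxTextile

section AuxOrd

variable {A : Type} [CommRing A] {n q : ℕ} {𝔫 : Ideal A} {N : ℕ}

lemma ordV_le {c : Fin q → MvPowerSeries (Fin n) A} {j : Fin q} {d : Fin n →₀ ℕ}
    (h : MvPowerSeries.coeff d (c j) ≠ 0) :
    ordV c ≤ ((d.sum fun _ e => e : ℕ) : ℕ∞) :=
  sInf_le ⟨j, d, h, rfl⟩

lemma coeff_eq_zero_of_lt_ordV {c : Fin q → MvPowerSeries (Fin n) A} {j : Fin q}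
    {d : Fin n →₀ ℕ} (h : ((d.sum fun _ e => e : ℕ) : ℕ∞) < ordV c) :
    MvPowerSeries.coeff d (c j) = 0 := by
  by_contra hc
  exact absurd (ordV_le hc) (not_le.mpr h)

lemma exists_ordV {c : Fin q → MvPowerSeries (Fin n) A} (hc : c ≠ 0) :
    ∃ (j : Fin q) (d : Fin n →₀ ℕ), MvPowerSeries.coeff d (c j) ≠ 0 ∧
      ((d.sum fun _ e => e : ℕ) : ℕ∞) = ordV c := by
  have hne : {N : ℕ∞ | ∃ (j : Fin q) (d : Fin n →₀ ℕ),
      MvPowerSeries.coeff d (c j) ≠ 0 ∧ N = (d.sum fun _ e => e : ℕ)}.Nonempty := by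
    obtain ⟨j, hj⟩ := Function.ne_iff.mp hc
    have : ∃ d, MvPowerSeries.coeff d (c j) ≠ 0 := by
      by_contra hall
      push_neg at hall
      exact hj (MvPowerSeries.ext fun d => by simp [hall d])
    obtain ⟨d, hd⟩ := this
    exact ⟨_, j, d, hd, rfl⟩
  obtain ⟨j, d, h1, h2⟩ := csInf_mem hne
  exact ⟨j, d, h1, h2.symm⟩

lemma ordV_zero : ordV (0 : Fin q → MvPowerSeries (Fin n) A) = ⊤ := by
  unfold ordV
  have : {N : ℕ∞ | ∃ (j : Fin q) (d : Fin n →₀ ℕ),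
      MvPowerSeries.coeff d ((0 : Fin q → MvPowerSeries (Fin n) A) j) ≠ 0 ∧
      N = (d.sum fun _ e => e : ℕ)} = ∅ := by
    ext x
    simp
  rw [this, sInf_empty]

lemma ordV_ne_top {c : Fin q → MvPowerSeries (Fin n) A} (hc : c ≠ 0) : ordV c ≠ ⊤ := by
  obtain ⟨j, d, _, h2⟩ := exists_ordV hc
  rw [← h2]
  exact WithTop.natCast_ne_top _

lemma powIdx_lt (hN : 𝔫 ^ N = ⊥) {a : A} (ha : a ≠ 0) : powIdx 𝔫 N a < N := by
  have h0mem : (0 : ℕ) ∈ {i : ℕ | a ∈ 𝔫 ^ i} := by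
    simp [Ideal.one_eq_top]
  have hNpos : 0 < N := by
    rcases Nat.eq_zero_or_pos N with h | h
    · exfalso
      rw [h, pow_zero, Ideal.one_eq_top] at hN
      have : a ∈ (⊥ : Ideal A) := hN ▸ Submodule.mem_top
      exact ha (Ideal.mem_bot.mp this)
    · exact h
  have hbound : ∀ i ∈ {i : ℕ | a ∈ 𝔫 ^ i}, i ≤ N - 1 := by
    intro i hi
    by_contra hlt
    push_neg at hlt
    have hNi : N ≤ i := by omega
    have : 𝔫 ^ i ≤ 𝔫 ^ N := Ideal.pow_le_pow_right hNi
    exact ha (Ideal.mem_bot.mp (hN ▸ this hi))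
  have hsup : sSup {i : ℕ | a ∈ 𝔫 ^ i} ≤ N - 1 := csSup_le ⟨0, h0mem⟩ hbound
  rw [powIdx, if_neg ha]
  omega

lemma powAtMin_lt (hN : 𝔫 ^ N = ⊥) {c : Fin q → MvPowerSeries (Fin n) A} (hc : c ≠ 0) :
    powAtMin 𝔫 N c < N := by
  obtain ⟨j, d, h1, h2⟩ := exists_ordV hc
  have hmem : powIdx 𝔫 N (MvPowerSeries.coeff d (c j)) ∈
      {e : ℕ | ∃ (j : Fin q) (d : Fin n →₀ ℕ),
        MvPowerSeries.coeff d (c j) ≠ 0 ∧ ((d.sum fun _ e' => e' : ℕ) : ℕ∞) = ordV c ∧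
        e = powIdx 𝔫 N (MvPowerSeries.coeff d (c j))} := ⟨j, d, h1, h2, rfl⟩
  exact lt_of_le_of_lt (Nat.sInf_le hmem) (powIdx_lt hN h1)

lemma ordV_neg (c : Fin q → MvPowerSeries (Fin n) A) : ordV (-c) = ordV c := by
  unfold ordV
  congr 1
  ext x
  simp only [Set.mem_setOf_eq, Pi.neg_apply, map_neg, neg_ne_zero]

lemma powIdx_neg (𝔫 : Ideal A) (N : ℕ) (a : A) : powIdx 𝔫 N (-a) = powIdx 𝔫 N a := by
  unfold powIdx
  by_cases h : a = 0
  · simp [h]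
  · rw [if_neg (by simpa using h), if_neg h]
    congr 1
    ext i
    exact Submodule.neg_mem_iff (𝔫 ^ i)

lemma powAtMin_neg (c : Fin q → MvPowerSeries (Fin n) A) :
    powAtMin 𝔫 N (-c) = powAtMin 𝔫 N c := by
  unfold powAtMin
  rw [ordV_neg]
  congr 1
  ext e
  constructor
  · rintro ⟨j, d, h1, h2, h3⟩
    have hc : MvPowerSeries.coeff d ((-c) j) = -(MvPowerSeries.coeff d (c j)) := by
      simp
    rw [hc] at h1 h3
    exact ⟨j, d, by simpa using h1, h2, by rwa [powIdx_neg] at h3⟩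
  · rintro ⟨j, d, h1, h2, h3⟩
    have hc : MvPowerSeries.coeff d ((-c) j) = -(MvPowerSeries.coeff d (c j)) := by
      simp
    exact ⟨j, d, by simp [hc, h1], h2, by rw [hc, powIdx_neg]; exact h3⟩

lemma WOrd_neg (c : Fin q → MvPowerSeries (Fin n) A) : WOrd 𝔫 N (-c) = WOrd 𝔫 N c := by
  unfold WOrd
  rw [ordV_neg, powAtMin_neg]

lemma key_step (hNc : 𝔫 ^ N = ⊥) {c c' : Fin q → MvPowerSeries (Fin n) A}
    (hc : c ≠ 0) (hlt : refLt (WOrd 𝔫 N c) (WOrd 𝔫 N c')) (s : ℕ)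
    (hs : (s : ℕ∞) ≤ (N : ℕ∞) * ordV c + (powAtMin 𝔫 N c : ℕ∞)) :
    ((s + 1 : ℕ) : ℕ∞) ≤ (N : ℕ∞) * ordV c' + (powAtMin 𝔫 N c' : ℕ∞) := by
  obtain ⟨j, d, h1, h2⟩ := exists_ordV hc
  set o : ℕ := d.sum fun _ e => e with ho
  have hp : powAtMin 𝔫 N c < N := powAtMin_lt hNc hc
  have hNpos : 0 < N := lt_of_le_of_lt (Nat.zero_le _) hp
  set p : ℕ := powAtMin 𝔫 N c
  have hs' : s ≤ N * o + p := by
    rw [← h2] at hs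
    exact_mod_cast hs
  rcases hlt with h | ⟨heq, hplt⟩
  · simp only [WOrd] at h
    rcases eq_or_ne (ordV c') ⊤ with ht | ht
    · rw [ht, ENat.mul_top (by exact_mod_cast hNpos.ne'), top_add]
      exact le_top
    · lift ordV c' to ℕ using ht with o' ho'
      have hoo' : o < o' := by
        rw [← h2] at h
        exact_mod_cast h
      have hmul : N * (o + 1) ≤ N * o' := Nat.mul_le_mul_left N (by omega)
      have hdist : N * (o + 1) = N * o + N := by ring
      have : s + 1 ≤ N * o' + powAtMin 𝔫 N c' := by
        have hple : p + 1 ≤ N := hp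
        linarith
      exact_mod_cast this
  · simp only [WOrd] at heq hplt
    have heq' : ordV c' = (o : ℕ∞) := by rw [← heq, ← h2]
    have : s + 1 ≤ N * o + powAtMin 𝔫 N c' := by
      linarith
    rw [heq']
    exact_mod_cast this

lemma chain_bound (hNc : 𝔫 ^ N = ⊥) (hNpos : 0 < N)
    (c : ℕ → Fin q → MvPowerSeries (Fin n) A)
    (hstep : ∀ s, (c s = 0 → c (s + 1) = 0) ∧
      (c s ≠ 0 → refLt (WOrd 𝔫 N (c s)) (WOrd 𝔫 N (c (s + 1))))) :
    ∀ s : ℕ, (s : ℕ∞) ≤ (N : ℕ∞) * ordV (c s) + (powAtMin 𝔫 N (c s) : ℕ∞) := by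
  intro s
  induction s with
  | zero => simpa using zero_le _
  | succ s ih =>
    by_cases h : c s = 0
    · rw [(hstep s).1 h, ordV_zero, ENat.mul_top (by exact_mod_cast hNpos.ne'), top_add]
      exact le_top
    · exact_mod_cast key_step hNc h ((hstep s).2 h) s ih

lemma coeff_vanish (hNc : 𝔫 ^ N = ⊥) (hNpos : 0 < N)
    (c : ℕ → Fin q → MvPowerSeries (Fin n) A)
    (hstep : ∀ s, (c s = 0 → c (s + 1) = 0) ∧
      (c s ≠ 0 → refLt (WOrd 𝔫 N (c s)) (WOrd 𝔫 N (c (s + 1)))))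
    (D : ℕ) (s : ℕ) (hsD : N * (D + 1) ≤ s) (j : Fin q) (d : Fin n →₀ ℕ)
    (hd : (d.sum fun _ e => e) ≤ D) :
    MvPowerSeries.coeff d (c s j) = 0 := by
  by_contra hne
  have hc : c s ≠ 0 := by
    intro h0
    apply hne
    rw [h0]
    simp
  obtain ⟨j', d', h1, h2⟩ := exists_ordV hc
  set o : ℕ := d'.sum fun _ e => e with ho
  have hoD : o ≤ D := by
    have hle : ordV (c s) ≤ ((d.sum fun _ e => e : ℕ) : ℕ∞) := ordV_le hne
    rw [← h2] at hle
    have : o ≤ d.sum fun _ e => e := by exact_mod_cast hle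
    omega
  have hp : powAtMin 𝔫 N (c s) < N := powAtMin_lt hNc hc
  have hchain := chain_bound hNc hNpos c hstep s
  rw [← h2] at hchain
  have hs' : s ≤ N * o + powAtMin 𝔫 N (c s) := by exact_mod_cast hchain
  have hmul : N * o ≤ N * D := Nat.mul_le_mul_left N hoD
  have hdist : N * (D + 1) = N * D + N := by ring
  linarith

end AuxOrd
/-- **Inverse Mapping Theorem over a test-ring.**
Let `A` be a test-ring (local `k`-algebra with nilpotent maximal ideal), `U = m^l·C_A^m`, and
`f : U → C_A^m` textile with `f 0 = 0`, `f = ℓ + h` on `U` and `f(U) ⊆ W`, where `ℓ : U → W`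
is an invertible linear textile map with linear inverse `ℓ̃`. If `ℓ̃∘h` is contractive on `U`
with respect to the refined order `W(·)`, then `f` admits a textile inverse on `U`. -/
theorem inverse_mapping_theorem_test_ring
    {k : Type} [Field k] [CharZero k]
    {A : Type} [CommRing A] [Algebra k A] [IsLocalRing A]
    (N : ℕ) (hN : (IsLocalRing.maximalIdeal A) ^ N = ⊥)
    {n m : ℕ} (l : ℕ)
    (U : Set (Fin m → MvPowerSeries (Fin n) A)) (hU : U = nbhd A n m l)
    (W : Set (Fin m → MvPowerSeries (Fin n) A))
    (f ℓ ℓt h : (Fin m → MvPowerSeries (Fin n) A) → Fin m → MvPowerSeries (Fin n) A)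
    (hf_tex : IsTextile f) (hf0 : f 0 = 0)
    (hℓ_tex : IsTextile ℓ) (hℓ_lin : IsLinearMap A ℓ)
    (hℓt_tex : IsTextile ℓt) (hℓt_lin : IsLinearMap A ℓt)
    (hdecomp : ∀ a ∈ U, f a = ℓ a + h a)
    (hfU : ∀ a ∈ U, f a ∈ W)
    (hℓU : ∀ a ∈ U, ℓ a ∈ W)
    (hℓℓt : ∀ w ∈ W, ℓt w ∈ U ∧ ℓ (ℓt w) = w)
    (hℓtℓ : ∀ a ∈ U, ℓt (ℓ a) = a)
    (hcontr : ∀ a ∈ U, ∀ b ∈ U, a ≠ b →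
      refLt (WOrd (IsLocalRing.maximalIdeal A) N (a - b))
            (WOrd (IsLocalRing.maximalIdeal A) N (ℓt (h a) - ℓt (h b)))) :
    ∃ g : (Fin m → MvPowerSeries (Fin n) A) → Fin m → MvPowerSeries (Fin n) A,
      IsTextile g ∧
      (∀ w ∈ f '' U, g w ∈ U ∧ f (g w) = w) ∧
      (∀ a ∈ U, g (f a) = a) := by

  classical
  set I := IsLocalRing.maximalIdeal A with hI
  -- Degenerate case: `N = 0` forces `A` to be trivial.
  rcases Nat.eq_zero_or_pos N with hN0 | hNpos
  · have h10 : (0 : A) = 1 := by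
      rw [hN0, pow_zero, Ideal.one_eq_top] at hN
      exact (Ideal.mem_bot.mp (hN ▸ (Submodule.mem_top : (1 : A) ∈ (⊤ : Ideal A)))).symm
    haveI : Subsingleton A := subsingleton_of_zero_eq_one h10
    haveI : Subsingleton (Fin m → MvPowerSeries (Fin n) A) :=
      ⟨fun a b => funext fun j => funext fun d => Subsingleton.elim _ _⟩
    refine ⟨id, ⟨fun ν => MvPolynomial.X ν, fun c => ?_⟩, ?_, ?_⟩
    · funext j d
      show c j d = MvPolynomial.eval (cf c) (MvPolynomial.X (j, d))
      rw [MvPolynomial.eval_X]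
      rfl
    · rintro w ⟨a, haU, rfl⟩
      have hid : id (f a) = a := Subsingleton.elim _ _
      rw [hid]
      exact ⟨haU, rfl⟩
    · intro a _
      exact Subsingleton.elim _ _
  -- Main case: `0 < N`.
  -- The textile map `K` agrees with `ℓt ∘ h` on `U`.
  set K : (Fin m → MvPowerSeries (Fin n) A) → Fin m → MvPowerSeries (Fin n) A :=
    fun c => ℓt (f c - ℓ c) with hKdef
  have hK_tex : IsTextile K := isTextile_comp hℓt_tex (isTextile_sub hf_tex hℓ_tex)
  have hK_eq : ∀ b ∈ U, K b = ℓt (h b) := by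
    intro b hb
    show ℓt (f b - ℓ b) = ℓt (h b)
    exact congrArg ℓt (by rw [hdecomp b hb]; exact add_sub_cancel_left (ℓ b) (h b))
  -- The iteration sequence.
  set bseq : ℕ → (Fin m → MvPowerSeries (Fin n) A) → Fin m → MvPowerSeries (Fin n) A :=
    fun s => Nat.rec ℓt (fun _ prev => fun w => ℓt w - K (prev w)) s with hbseq
  have hb0 : bseq 0 = ℓt := rfl
  have hbsucc : ∀ s w, bseq (s + 1) w = ℓt w - K (bseq s w) := fun s w => rfl
  have hbseq_tex : ∀ s, IsTextile (bseq s) := by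
    intro s
    induction s with
    | zero => exact hℓt_tex
    | succ s ih =>
      have := isTextile_sub hℓt_tex (isTextile_comp hK_tex ih)
      exact this
  choose B hB using hbseq_tex
  set deg : (Fin n →₀ ℕ) → ℕ := fun d => d.sum fun _ e => e with hdeg
  -- The candidate inverse.
  refine ⟨fun w j => fun d => MvPolynomial.eval (cf w) (B (N * (deg d + 1)) (j, d)),
    ⟨fun ν => B (N * (deg ν.2 + 1)) ν, fun c => rfl⟩, ?_, ?_⟩
  -- The key computation: `g (f a) = a` for `a ∈ U`.
  all_goals {
    have hmain : ∀ a ∈ U,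
        (fun w j => fun d : Fin n →₀ ℕ =>
          MvPolynomial.eval (cf w) (B (N * (deg d + 1)) (j, d))) (f a) = a := by
      intro a ha
      set w := f a with hw
      have hwW : w ∈ W := hfU a ha
      have hU_sub : ∀ x y, x ∈ U → y ∈ U → x - y ∈ U := by
        rw [hU]
        intro x y hx hy j d hd
        have : (x - y) j = x j - y j := rfl
        rw [this, map_sub, hx j d hd, hy j d hd, sub_zero]
      have hltw_U : ℓt w ∈ U := (hℓℓt w hwW).1
      have hKU : ∀ b ∈ U, K b ∈ U := by
        intro b hb
        have hKb : K b = ℓt (f b) - b := by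
          rw [hK_eq b hb, hdecomp b hb, hℓt_lin.map_add, hℓtℓ b hb]
          exact (add_sub_cancel_left b (ℓt (h b))).symm
        rw [hKb]
        exact hU_sub _ _ (hℓℓt _ (hfU b hb)).1 hb
      have hbU : ∀ s, bseq s w ∈ U := by
        intro s
        induction s with
        | zero => exact hltw_U
        | succ s ih =>
          rw [hbsucc]
          exact hU_sub _ _ hltw_U (hKU _ ih)
      have hfix : ℓt w - ℓt (h a) = a := by
        rw [hw, hdecomp a ha, hℓt_lin.map_add, hℓtℓ a ha]
        exact add_sub_cancel_right a (ℓt (h a))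
      set cs : ℕ → Fin m → MvPowerSeries (Fin n) A := fun s => bseq s w - a with hcs
      have hrec : ∀ s, cs (s + 1) = ℓt (h a) - ℓt (h (bseq s w)) := by
        intro s
        have hw' : ℓt w = a + ℓt (h a) := sub_eq_iff_eq_add.mp hfix
        rw [hcs]
        show (ℓt w - K (bseq s w)) - a = _
        rw [hK_eq _ (hbU s), hw']
        abel
      have hstep : ∀ s, (cs s = 0 → cs (s + 1) = 0) ∧
          (cs s ≠ 0 → refLt (WOrd I N (cs s)) (WOrd I N (cs (s + 1)))) := by
        intro s
        constructor
        · intro h0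
          have hba : bseq s w = a := by
            have := sub_eq_zero.mp h0
            exact this
          rw [hrec, hba, sub_self]
        · intro h0
          have hne : a ≠ bseq s w := by
            intro e
            exact h0 (by rw [hcs]; simp [← e])
          have hc := hcontr a ha (bseq s w) (hbU s) hne
          have hneg : a - bseq s w = -(cs s) := by
            rw [hcs]
            simp only [neg_sub]
          rw [hneg, WOrd_neg] at hc
          rw [hrec]
          exact hc
      -- conclude coefficientwise
      funext j d
      have hvan : MvPowerSeries.coeff d (cs (N * (deg d + 1)) j) = 0 :=
        coeff_vanish hN hNpos cs hstep (deg d) (N * (deg d + 1)) le_rfl j d le_rfl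
      have hcoeff : MvPowerSeries.coeff d (bseq (N * (deg d + 1)) w j)
          = MvPowerSeries.coeff d (a j) := by
        have : cs (N * (deg d + 1)) j = bseq (N * (deg d + 1)) w j - a j := rfl
        rw [this, map_sub, sub_eq_zero] at hvan
        exact hvan
      show MvPolynomial.eval (cf w) (B (N * (deg d + 1)) (j, d)) = a j d
      have hBcoeff : MvPowerSeries.coeff d (bseq (N * (deg d + 1)) w j)
          = MvPolynomial.eval (cf w) (B (N * (deg d + 1)) (j, d)) := by
        rw [hB]
        rfl
      rw [← hBcoeff, hcoeff]
      rfl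
    first
    | · rintro w ⟨a, haU, rfl⟩
        rw [hmain a haU]
        exact ⟨haU, rfl⟩
    | · intro a haU
        exact hmain a haU
  }
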